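/- For the Collatz function f(n) = n/2 if n even, 3n+1 if n odd: for all natural numbers n, p, q, f^n(p·2^n + q) = p·6^{μ(q)} + f^n(q) and μ(p·2^n + q) = μ(q), where μ(q) = μ_n(q) is the number of indices 0 ≤ i < n such that f^i(q) is odd. -/

import Mathlib

/-- The Collatz function: `m / 2` if `m` even, `3 * m + 1` if odd. -/
def collatz : ℕ → ℕ := fun m => if Even m then m / 2 else 3 * m + 1

/-- `μ n q` counts indices `i < n` with `collatz^[i] q` odd. -/
def muCollatz (n q : ℕ) : ℕ :=
  ((Finset.range n).filter (fun i => Odd (collatz^[i] q))).card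

lemma muCollatz_succ (n q : ℕ) :
    muCollatz (n + 1) q = (if Odd q then 1 else 0) + muCollatz n (collatz q) := by
  unfold muCollatz
  rw [Finset.card_filter, Finset.card_filter, Finset.sum_range_succ']
  simp only [Function.iterate_succ_apply, Function.iterate_zero_apply]
  exact add_comm _ _

lemma collatz_even {m : ℕ} (h : Even m) : collatz m = m / 2 := by
  simp [collatz, h]

lemma collatz_odd {m : ℕ} (h : Odd m) : collatz m = 3 * m + 1 := by
  simp [collatz, Nat.not_even_iff_odd.mpr h]

theorem collatz_iterate_add (n p q : ℕ) :
    collatz^[n] (p * 2 ^ n + q) = p * 6 ^ (muCollatz n q) + collatz^[n] q ∧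
    muCollatz n (p * 2 ^ n + q) = muCollatz n q := by
  induction n generalizing p q with
  | zero => simp [muCollatz]
  | succ n ih =>
    rw [Function.iterate_succ_apply, Function.iterate_succ_apply,
      muCollatz_succ n (p * 2 ^ (n + 1) + q), muCollatz_succ n q]
    rcases Nat.even_or_odd q with hq | hq
    · have hE : Even (p * 2 ^ (n + 1) + q) := by
        refine Even.add ⟨p * 2 ^ n, ?_⟩ hq
        ring
      have key : collatz (p * 2 ^ (n + 1) + q) = p * 2 ^ n + collatz q := by
        rw [collatz_even hE, collatz_even hq]
        obtain ⟨k, hk⟩ := hq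
        subst hk
        rw [show p * 2 ^ (n + 1) + (k + k) = 2 * (p * 2 ^ n + k) from by ring,
          show k + k = 2 * k from by ring,
          Nat.mul_div_cancel_left _ (by norm_num : 0 < 2),
          Nat.mul_div_cancel_left _ (by norm_num : 0 < 2)]
      have hnq : ¬ Odd q := by simpa using hq
      have hnE : ¬ Odd (p * 2 ^ (n + 1) + q) := by simpa using hE
      rw [key, if_neg hnq, if_neg hnE]
      obtain ⟨h1, h2⟩ := ih p (collatz q)
      simpa using ⟨h1, h2⟩
    · have hO : Odd (p * 2 ^ (n + 1) + q) := by
        refine Even.add_odd ⟨p * 2 ^ n, by ring⟩ hq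
      have key : collatz (p * 2 ^ (n + 1) + q) = 6 * p * 2 ^ n + collatz q := by
        rw [collatz_odd hO, collatz_odd hq]
        ring
      rw [key]
      obtain ⟨h1, h2⟩ := ih (6 * p) (collatz q)
      constructor
      · rw [h1]
        simp [hq, hO]
        ring
      · rw [h2]
        simp [hq, hO]
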